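/- For any finite set X, the internal coproduct Γ on the free vector space on topologies on X, defined by Γ(T) = Σ_{T' ⊚≺ T} T' ⊗ (T/T'), is coassociative. -/

import Mathlib

variable {X : Type*}

/-- The specialization quasi-order of a topology: `x ≤_T y` iff every
`T`-open set containing `x` contains `y`. -/
def leT (t : TopologicalSpace X) (x y : X) : Prop :=
  ∀ U : Set X, t.IsOpen U → x ∈ U → y ∈ U

/-- The specialization equivalence `∼_T`. -/
def simT (t : TopologicalSpace X) (x y : X) : Prop :=
  leT t x y ∧ leT t y x

/-- The topology of final segments of a relation `r`. -/
def topOfRel (r : X → X → Prop) : TopologicalSpace X where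
  IsOpen U := ∀ x ∈ U, ∀ y, r x y → y ∈ U
  isOpen_univ := fun _ _ y _ => Set.mem_univ y
  isOpen_inter := fun U V hU hV x hx y hr => ⟨hU x hx.1 y hr, hV x hx.2 y hr⟩
  isOpen_sUnion := fun S hS x hx y hr => by
    obtain ⟨U, hU, hxU⟩ := hx
    exact ⟨U, hU, hS U hU x hxU y hr⟩

/-- `T'` is finer than `T`: every `T`-open set is `T'`-open. -/
def finer (t' t : TopologicalSpace X) : Prop :=
  ∀ U : Set X, t.IsOpen U → t'.IsOpen U

/-- The quasi-order of the quotient topology `T/T'`: the transitive closure of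
`x R y ↔ (x ≤_T y or y ≤_{T'} x)`. -/
def quotRel (t t' : TopologicalSpace X) : X → X → Prop :=
  Relation.ReflTransGen (fun x y => leT t x y ∨ leT t' y x)

/-- The quotient topology `T/T'`. -/
def quotTop (t t' : TopologicalSpace X) : TopologicalSpace X :=
  topOfRel (quotRel t t')

/-- Restriction (subspace topology) of `t` to a subset `Y`. -/
def restrictT (t : TopologicalSpace X) (Y : Set X) : TopologicalSpace Y :=
  t.induced Subtype.val

/-- `T'` is `T`-admissible (`T' ⊚≺ T`). -/
def adm (t' t : TopologicalSpace X) : Prop :=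
  finer t' t ∧
  (∀ Y : Set X, @IsConnected X t' Y → restrictT t' Y = restrictT t Y) ∧
  (∀ x y : X,
    (quotRel t t' x y ∧ quotRel t t' y x) ↔ (quotRel t' t' x y ∧ quotRel t' t' y x))

open scoped TensorProduct

/-- The free vector space on the set of topologies on `X`. -/
abbrev TVect (X : Type*) := TopologicalSpace X →₀ ℚ

/-- The internal coproduct on basis elements. -/
noncomputable def GamFun (t : TopologicalSpace X) : TVect X ⊗[ℚ] TVect X :=
  ∑ᶠ (t' : TopologicalSpace X) (_ : adm t' t),
    (Finsupp.single t' (1 : ℚ)) ⊗ₜ[ℚ] (Finsupp.single (quotTop t t') (1 : ℚ))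

/-- The internal coproduct as a linear map. -/
noncomputable def GamLin (X : Type*) : TVect X →ₗ[ℚ] TVect X ⊗[ℚ] TVect X :=
  Finsupp.lsum ℚ (fun t => LinearMap.smulRight (LinearMap.id : ℚ →ₗ[ℚ] ℚ) (GamFun t))

section RelLayer
variable {α : Type*}

/-- zig-zag connectivity of a relation -/
def zigR (r : α → α → Prop) : α → α → Prop :=
  Relation.ReflTransGen (fun x y => r x y ∨ r y x)

/-- quotient relation -/
def qR (a c : α → α → Prop) : α → α → Prop :=
  Relation.ReflTransGen (fun x y => a x y ∨ c y x)

/-- relational admissibility -/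
def RelAdm (c a : α → α → Prop) : Prop :=
  (∀ x y, c x y → a x y) ∧
  (∀ x y, zigR c x y → a x y → c x y) ∧
  (∀ x y, qR a c x y → qR a c y x → zigR c x y)

variable {a b c s : α → α → Prop}

lemma zigR_of_rel (h : c x y) : zigR c x y := Relation.ReflTransGen.single (Or.inl h)

lemma zigR_symm (h : zigR c x y) : zigR c y x := by
  induction h with
  | refl => exact Relation.ReflTransGen.refl
  | tail _ hstep ih => exact Relation.ReflTransGen.head (Or.symm hstep) ih

lemma zigR_trans (h1 : zigR c x y) (h2 : zigR c y z) : zigR c x z :=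
  Relation.ReflTransGen.trans h1 h2

lemma zigR_mono_zig (hmap : ∀ u v, c u v → zigR b u v) (h : zigR c x y) : zigR b x y := by
  induction h with
  | refl => exact Relation.ReflTransGen.refl
  | tail _ hstep ih =>
    rcases hstep with h' | h'
    · exact ih.trans (hmap _ _ h')
    · exact ih.trans (zigR_symm (hmap _ _ h'))

lemma qR_of_left (h : a x y) : qR a c x y := Relation.ReflTransGen.single (Or.inl h)
lemma qR_of_right (h : c y x) : qR a c x y := Relation.ReflTransGen.single (Or.inr h)

lemma qR_mono (ha : ∀ u v, a u v → a' u v) (hc : ∀ u v, c u v → c' u v)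
    (h : qR a c x y) : qR a' c' x y :=
  Relation.ReflTransGen.mono (fun u v (h' : a u v ∨ c v u) => h'.imp (ha u v) (hc v u)) x y h

lemma zigR_le_qR (hca : ∀ u v, c u v → a u v) (h : zigR c x y) : qR a c x y :=
  Relation.ReflTransGen.mono (fun u v (h' : c u v ∨ c v u) => h'.imp (hca u v) id) x y h

lemma qR_le_zigR (hcb : ∀ u v, c u v → b u v) (h : qR b c x y) : zigR b x y :=
  Relation.ReflTransGen.mono (fun u v (h' : b u v ∨ c v u) => h'.imp id (hcb v u)) x y h

lemma qR_rev (hca : ∀ u v, c u v → a u v) (h : qR b c y x) : qR a b x y := by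
  induction h with
  | refl => exact Relation.ReflTransGen.refl
  | tail _ hstep ih =>
    rcases hstep with h' | h'
    · exact Relation.ReflTransGen.head (Or.inr h') ih
    · exact Relation.ReflTransGen.head (Or.inl (hca _ _ h')) ih

lemma zigR_qR_iff (hcb : ∀ u v, c u v → b u v) :
    zigR (qR b c) x y ↔ zigR b x y := by
  constructor
  · exact zigR_mono_zig (fun u v h => qR_le_zigR hcb h)
  · exact zigR_mono_zig (fun u v h => zigR_of_rel (qR_of_left h))

lemma qR_qR_iff (hcb : ∀ u v, c u v → b u v) (hba : ∀ u v, b u v → a u v) :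
    qR (qR a c) (qR b c) x y ↔ qR a b x y := by
  constructor
  · intro h
    induction h with
    | refl => exact Relation.ReflTransGen.refl
    | tail _ hstep ih =>
      rcases hstep with h' | h'
      · exact ih.trans (qR_mono (fun _ _ h => h) hcb h')
      · exact ih.trans (qR_rev (fun u v h => hba u v (hcb u v h)) h')
  · exact qR_mono (fun u v h => qR_of_left h) (fun u v h => qR_of_left h)

/-- Key path-conversion lemma. -/
lemma convertPath (E : α → α → Prop)
    (hEs : ∀ u v, E u v → E v u) (hEt : ∀ u v w, E u v → E v w → E u w)
    (hcb : ∀ u v, c u v → b u v)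
    (hstep : ∀ u v, E u v → a u v → b u v) :
    ∀ x y, qR a c x y → (∀ z, qR a c x z → qR a c z y → E x z) → qR b c x y := by
  intro x y h
  induction h using Relation.ReflTransGen.head_induction_on with
  | refl => intro _; exact Relation.ReflTransGen.refl
  | head hgen hrest ih =>
    rename_i x' w
    intro hE
    have hxw : E x' w := hE w (Relation.ReflTransGen.single hgen) hrest
    have hE' : ∀ z, qR a c w z → qR a c z y → E w z := fun z h1 h2 =>
      hEt _ _ _ (hEs _ _ hxw) (hE z (Relation.ReflTransGen.head hgen h1) h2)
    have hwy := ih hE'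
    rcases hgen with h' | h'
    · exact Relation.ReflTransGen.head (Or.inl (hstep _ _ hxw h')) hwy
    · exact Relation.ReflTransGen.head (Or.inr h') hwy

/-- F1 : admissibility is transitive. -/
lemma relAdm_trans (hcb : RelAdm c b) (hba : RelAdm b a) : RelAdm c a := by
  obtain ⟨cb1, cb2, cb3⟩ := hcb
  obtain ⟨ba1, ba2, ba3⟩ := hba
  have key : ∀ u v, qR a c u v → qR a b u v := fun u v => qR_mono (fun _ _ h => h) cb1
  refine ⟨fun x y h => ba1 _ _ (cb1 _ _ h), ?_, ?_⟩
  · intro x y hz ha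
    exact cb2 x y hz (ba2 x y (zigR_mono_zig (fun u v h => zigR_of_rel (cb1 u v h)) hz) ha)
  · intro x y h1 h2
    have hq1 : qR b c x y :=
      convertPath (zigR b) (fun _ _ => zigR_symm) (fun _ _ _ => zigR_trans) cb1 ba2 x y h1
        (fun z hxz hzy => ba3 x z (key _ _ hxz) (key _ _ (hzy.trans h2)))
    have hq2 : qR b c y x :=
      convertPath (zigR b) (fun _ _ => zigR_symm) (fun _ _ _ => zigR_trans) cb1 ba2 y x h2
        (fun z hyz hzx => ba3 y z (key _ _ hyz) (key _ _ (hzx.trans h1)))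
    exact cb3 x y hq1 hq2

/-- F4 : reconstruction of the middle topology. -/
lemma relAdm_inf (hcb : RelAdm c b) (hba : RelAdm b a) :
    ∀ x y, b x y ↔ (qR b c x y ∧ a x y) := by
  intro x y
  constructor
  · exact fun h => ⟨qR_of_left h, hba.1 _ _ h⟩
  · rintro ⟨hq, ha⟩
    exact hba.2.1 x y (qR_le_zigR hcb.1 hq) ha

/-- F2 : the quotients remain admissible. -/
lemma relAdm_quot (hcb : RelAdm c b) (hba : RelAdm b a) : RelAdm (qR b c) (qR a c) := by
  obtain ⟨cb1, cb2, cb3⟩ := hcb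
  obtain ⟨ba1, ba2, ba3⟩ := hba
  have key : ∀ u v, qR a c u v → qR a b u v := fun u v => qR_mono (fun _ _ h => h) cb1
  refine ⟨fun x y h => qR_mono ba1 (fun _ _ h => h) h, ?_, ?_⟩
  · intro x y hz hA
    have hzb : zigR b x y := (zigR_qR_iff cb1).1 hz
    exact convertPath (zigR b) (fun _ _ => zigR_symm) (fun _ _ _ => zigR_trans) cb1 ba2 x y hA
      (fun z hxz hzy => ba3 x z (key _ _ hxz)
        ((key _ _ hzy).trans (zigR_le_qR ba1 (zigR_symm hzb))))
  · intro x y h1 h2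
    have h1' : qR a b x y := (qR_qR_iff cb1 ba1).1 h1
    have h2' : qR a b y x := (qR_qR_iff cb1 ba1).1 h2
    exact (zigR_qR_iff cb1).2 (ba3 x y h1' h2')

section Backward
variable (hca : RelAdm c a) (hs : RelAdm s (qR a c))
variable (har : ∀ x, a x x) (hsr : ∀ x, s x x) (hst : ∀ x y z, s x y → s y z → s x z)

/-- the reconstructed middle relation -/
local notation "B" => (fun x y => s x y ∧ a x y)

include hca hs in
lemma B1_zigc_le_s : ∀ x y, zigR c x y → s x y := by
  intro x y h
  have hA : qR a c x y := zigR_le_qR hca.1 h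
  have hA' : qR a c y x := zigR_le_qR hca.1 (zigR_symm h)
  have hzs : zigR s x y := hs.2.2 x y (qR_of_left hA) (qR_of_left hA')
  exact hs.2.1 x y hzs hA

include hca hs in
lemma B1_c_le_b : ∀ x y, c x y → s x y ∧ a x y :=
  fun x y h => ⟨B1_zigc_le_s hca hs x y (zigR_of_rel h), hca.1 _ _ h⟩

include hs in
lemma B1_hii : ∀ u v, zigR s u v → a u v → s u v ∧ a u v :=
  fun u v hz ha => ⟨hs.2.1 u v hz (qR_of_left ha), ha⟩

include hca hs hsr hst in
lemma B1_qbc_iff : ∀ x y, qR B c x y ↔ s x y := by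
  intro x y
  constructor
  · intro h
    induction h with
    | refl => exact hsr x
    | tail _ hstep ih =>
      rcases hstep with h' | h'
      · exact hst _ _ _ ih h'.1
      · exact hst _ _ _ ih (B1_zigc_le_s hca hs _ _ (zigR_symm (zigR_of_rel h')))
  · intro hsxy
    have hA : qR a c x y := hs.1 x y hsxy
    exact convertPath (zigR s) (fun _ _ => zigR_symm) (fun _ _ _ => zigR_trans)
      (B1_c_le_b hca hs) (B1_hii hs) x y hA
      (fun z hxz hzy => hs.2.2 x z (qR_of_left hxz)
        ((qR_of_left hzy).trans (qR_of_right hsxy)))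

include hca hs hsr hst in
lemma B1_zigs_iff_zigb : ∀ x y, zigR s x y ↔ zigR B x y := by
  intro x y
  constructor
  · refine zigR_mono_zig (fun u v h => ?_)
    have : qR B c u v := (B1_qbc_iff hca hs hsr hst u v).2 h
    exact qR_le_zigR (B1_c_le_b hca hs) this
  · exact zigR_mono_zig (fun u v h => zigR_of_rel h.1)

include hca hs hsr hst in
lemma B1_relAdm_ba : RelAdm B a := by
  refine ⟨fun x y h => h.2, ?_, ?_⟩
  · intro x y hz ha
    exact B1_hii hs x y ((B1_zigs_iff_zigb hca hs hsr hst x y).2 hz) ha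
  · intro x y h1 h2
    have conv : ∀ u v, qR a B u v → qR (qR a c) s u v :=
      fun u v => qR_mono (fun _ _ h => qR_of_left h) (fun _ _ h => h.1)
    have hzs : zigR s x y := hs.2.2 x y (conv _ _ h1) (conv _ _ h2)
    exact (B1_zigs_iff_zigb hca hs hsr hst x y).1 hzs

include hca hs hsr hst in
lemma B1_relAdm_cb : RelAdm c B := by
  refine ⟨B1_c_le_b hca hs, ?_, ?_⟩
  · intro x y hz hb
    exact hca.2.1 x y hz hb.2
  · intro x y h1 h2
    have hs1 : s x y := (B1_qbc_iff hca hs hsr hst x y).1 h1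
    have hs2 : s y x := (B1_qbc_iff hca hs hsr hst y x).1 h2
    exact hca.2.2 x y (hs.1 x y hs1) (hs.1 y x hs2)

end Backward
end RelLayer

section Glue
variable {X : Type*}

lemma leT_refl (t : TopologicalSpace X) (x : X) : leT t x x := fun _ _ h => h

lemma leT_trans {t : TopologicalSpace X} {x y z : X} (h1 : leT t x y) (h2 : leT t y z) :
    leT t x z := fun U hU hx => h2 U hU (h1 U hU hx)

lemma isOpen_topOfRel_iff {r : X → X → Prop} {U : Set X} :
    (topOfRel r).IsOpen U ↔ ∀ x ∈ U, ∀ y, r x y → y ∈ U := Iff.rfl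

lemma leT_topOfRel {r : X → X → Prop} {x y : X} :
    leT (topOfRel r) x y ↔ Relation.ReflTransGen r x y := by
  constructor
  · intro h
    exact h {z | Relation.ReflTransGen r x z}
      (fun u hu v hr => Relation.ReflTransGen.tail hu hr) Relation.ReflTransGen.refl
  · intro h
    induction h with
    | refl => exact leT_refl _ _
    | tail _ hstep ih =>
      exact leT_trans ih (fun U hU hx => hU _ hx _ hstep)

lemma leT_quotTop {t t' : TopologicalSpace X} :
    leT (quotTop t t') = quotRel t t' := by
  funext x y
  refine propext (leT_topOfRel.trans ?_)
  unfold quotRel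
  rw [Relation.reflTransGen_idem]

lemma quotRel_eq_qR (t t' : TopologicalSpace X) :
    quotRel t t' = qR (leT t) (leT t') := rfl

lemma isOpen_iff_upclosed [Finite X] {t : TopologicalSpace X} {U : Set X} :
    t.IsOpen U ↔ ∀ x ∈ U, ∀ y, leT t x y → y ∈ U := by
  constructor
  · exact fun h x hx y hle => hle U h hx
  · intro h
    have hopen : ∀ x : X, t.IsOpen {y | leT t x y} := by
      intro x
      have : {y | leT t x y} = ⋂₀ {V | t.IsOpen V ∧ x ∈ V} := by
        ext y
        simp only [Set.mem_setOf_eq, Set.mem_sInter]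
        exact ⟨fun h V hV => h V hV.1 hV.2, fun h V hV hx => h V ⟨hV, hx⟩⟩
      rw [this]
      exact Set.Finite.isOpen_sInter (Set.toFinite _) (fun V hV => hV.1)
    have hU : U = ⋃ x ∈ U, {y | leT t x y} := by
      ext z
      simp only [Set.mem_iUnion, Set.mem_setOf_eq]
      exact ⟨fun hz => ⟨z, hz, leT_refl t z⟩, fun ⟨x, hx, hle⟩ => h x hx z hle⟩
    rw [hU]
    exact isOpen_biUnion (fun x _ => hopen x)

lemma eq_of_leT_eq [Finite X] {t t' : TopologicalSpace X} (h : leT t = leT t') : t = t' := by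
  refine TopologicalSpace.ext ?_
  funext U
  refine propext (isOpen_iff_upclosed.trans ?_)
  rw [h]
  exact isOpen_iff_upclosed.symm

lemma topOfRel_leT [Finite X] (t : TopologicalSpace X) : topOfRel (leT t) = t := by
  refine TopologicalSpace.ext ?_
  funext U
  exact propext (isOpen_topOfRel_iff.trans isOpen_iff_upclosed.symm)

lemma finer_iff [Finite X] {t t' : TopologicalSpace X} :
    finer t' t ↔ ∀ x y, leT t' x y → leT t x y := by
  constructor
  · exact fun h x y hle U hU hx => hle U (h U hU) hx
  · intro h U hU
    rw [isOpen_iff_upclosed]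
    exact fun x hx y hle => h x y hle U hU hx

lemma leT_restrict {t : TopologicalSpace X} {Y : Set X} {p q : Y} :
    leT (restrictT t Y) p q ↔ leT t p.1 q.1 := by
  constructor
  · intro h U hU hp
    exact h (Subtype.val ⁻¹' U) ⟨U, hU, rfl⟩ hp
  · intro h V hV hp
    obtain ⟨U, hU, rfl⟩ := hV
    exact h U hU hp

lemma restrict_eq_iff [Finite X] {t t' : TopologicalSpace X} {Y : Set X} :
    restrictT t' Y = restrictT t Y ↔ ∀ p q : Y, (leT t' p.1 q.1 ↔ leT t p.1 q.1) := by
  constructor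
  · intro h p q
    rw [← @leT_restrict _ t' Y p q, ← @leT_restrict _ t Y p q, h]
  · intro h
    apply eq_of_leT_eq
    funext p q
    exact propext ((leT_restrict).trans ((h p q).trans leT_restrict.symm))

end Glue

section Conn
variable {X : Type*}

lemma isOpen_zigClass [Finite X] (t : TopologicalSpace X) (x : X) :
    t.IsOpen {z | zigR (leT t) x z} := by
  rw [isOpen_iff_upclosed]
  intro z hz y hle
  exact hz.tail (Or.inl hle)

lemma isOpen_nonZigClass [Finite X] (t : TopologicalSpace X) (x : X) :
    t.IsOpen {z | ¬ zigR (leT t) x z} := by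
  rw [isOpen_iff_upclosed]
  intro z hz y hle hzy
  exact hz (hzy.tail (Or.inr hle))

/-- connected sets are zigzag-connected -/
lemma zig_of_isConnected [Finite X] {t : TopologicalSpace X} {Y : Set X}
    (hY : @IsConnected X t Y) {p q : X} (hp : p ∈ Y) (hq : q ∈ Y) :
    zigR (leT t) p q := by
  by_contra hzig
  obtain ⟨z, _, hz1, hz2⟩ := hY.isPreconnected {z | zigR (leT t) p z} {z | ¬ zigR (leT t) p z}
    (isOpen_zigClass t p) (isOpen_nonZigClass t p)
    (fun w _ => em _) ⟨p, hp, Relation.ReflTransGen.refl⟩ ⟨q, hq, hzig⟩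
  exact hz2 hz1

/-- zigzag classes are connected -/
lemma isConnected_zigClass (t : TopologicalSpace X) (x : X) :
    @IsConnected X t {z | zigR (leT t) x z} := by
  constructor
  · exact ⟨x, Relation.ReflTransGen.refl⟩
  · intro U V hU hV hcover ⟨u, huZ, huU⟩ ⟨v, hvZ, hvV⟩
    have huv : zigR (leT t) u v := (zigR_symm huZ).trans hvZ
    -- walk from u to v
    have walk : ∀ p q : X, zigR (leT t) p q → zigR (leT t) x p → p ∈ U → q ∈ V →
        ({z | zigR (leT t) x z} ∩ (U ∩ V)).Nonempty := by
      intro p q h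
      induction h using Relation.ReflTransGen.head_induction_on with
      | refl =>
        intro hxp hpU hpV
        exact ⟨q, hxp, hpU, hpV⟩
      | head hgen hrest ih =>
        rename_i p' w
        intro hxp hpU hqV
        have hxw : zigR (leT t) x w := hxp.tail hgen
        rcases hgen with hle | hle
        · exact ih hxw (hle U hU hpU) hqV
        · by_cases hwU : w ∈ U
          · exact ih hxw hwU hqV
          · have hwV : w ∈ V := (hcover hxw).resolve_left hwU
            exact ⟨p', hxp, hpU, hle V hV hwV⟩
    exact walk u v huv huZ huU hvV

lemma zigR_eq_quotRel_self (t : TopologicalSpace X) :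
    zigR (leT t) = quotRel t t := rfl

/-- admissibility in terms of relations -/
lemma adm_iff [Finite X] {t t' : TopologicalSpace X} :
    adm t' t ↔ RelAdm (leT t') (leT t) := by
  constructor
  · rintro ⟨h1, h2, h3⟩
    refine ⟨finer_iff.1 h1, ?_, ?_⟩
    · intro x y hz ha
      have hY := h2 _ (isConnected_zigClass t' x)
      have := (restrict_eq_iff.1 hY ⟨x, Relation.ReflTransGen.refl⟩ ⟨y, hz⟩).2 ha
      exact this
    · intro x y hq1 hq2
      exact ((h3 x y).1 ⟨hq1, hq2⟩).1
  · rintro ⟨i, ii, iii⟩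
    refine ⟨finer_iff.2 i, ?_, ?_⟩
    · intro Y hY
      rw [restrict_eq_iff]
      intro p q
      exact ⟨i p.1 q.1, fun h => ii p.1 q.1 (zig_of_isConnected hY p.2 q.2) h⟩
    · intro x y
      constructor
      · rintro ⟨hq1, hq2⟩
        have hz := iii x y hq1 hq2
        exact ⟨hz, zigR_symm hz⟩
      · rintro ⟨hz, -⟩
        exact ⟨zigR_le_qR i hz, zigR_le_qR i (zigR_symm hz)⟩
  
end Conn

section MainLemmas
variable {X : Type*} [Finite X]

lemma adm_trans {t t' t'' : TopologicalSpace X} (h2 : adm t'' t') (h1 : adm t' t) :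
    adm t'' t :=
  adm_iff.2 (relAdm_trans (adm_iff.1 h2) (adm_iff.1 h1))

lemma adm_quot {t t' t'' : TopologicalSpace X} (h2 : adm t'' t') (h1 : adm t' t) :
    adm (quotTop t' t'') (quotTop t t'') := by
  rw [adm_iff, leT_quotTop, leT_quotTop, quotRel_eq_qR, quotRel_eq_qR]
  exact relAdm_quot (adm_iff.1 h2) (adm_iff.1 h1)

lemma quot_quot {t t' t'' : TopologicalSpace X} (h2 : adm t'' t') (h1 : adm t' t) :
    quotTop (quotTop t t'') (quotTop t' t'') = quotTop t t' := by
  have hcb := (adm_iff.1 h2).1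
  have hba := (adm_iff.1 h1).1
  show topOfRel _ = topOfRel _
  congr 1
  funext x y
  show quotRel (quotTop t t'') (quotTop t' t'') x y = quotRel t t' x y
  rw [quotRel_eq_qR, quotRel_eq_qR, leT_quotTop, leT_quotTop, quotRel_eq_qR, quotRel_eq_qR]
  exact propext (qR_qR_iff hcb hba)

/-- the reconstructed middle topology -/
def recT (s t : TopologicalSpace X) : TopologicalSpace X :=
  topOfRel (fun x y => leT s x y ∧ leT t x y)

lemma leT_recT {s t : TopologicalSpace X} :
    leT (recT s t) = fun x y => leT s x y ∧ leT t x y := by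
  funext x y
  refine propext (leT_topOfRel.trans ?_)
  rw [@Relation.reflTransGen_eq_self _ _ ⟨fun z => ⟨leT_refl s z, leT_refl t z⟩⟩
    ⟨fun u v w h1 h2 => ⟨leT_trans h1.1 h2.1, leT_trans h1.2 h2.2⟩⟩]

section Back
variable {t u s : TopologicalSpace X} (hu : adm u t) (hs : adm s (quotTop t u))

include hu hs

lemma hs_rel : RelAdm (leT s) (qR (leT t) (leT u)) := by
  have := adm_iff.1 hs
  rwa [leT_quotTop, quotRel_eq_qR] at this

lemma adm_back1 : adm (recT s t) t := by
  rw [adm_iff, leT_recT]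
  exact B1_relAdm_ba (adm_iff.1 hu) (hs_rel hu hs)
    (fun x => leT_refl s x) (fun x y z => leT_trans)

lemma adm_back2 : adm u (recT s t) := by
  rw [adm_iff, leT_recT]
  exact B1_relAdm_cb (adm_iff.1 hu) (hs_rel hu hs)
    (fun x => leT_refl s x) (fun x y z => leT_trans)

lemma quot_rec : quotTop (recT s t) u = s := by
  apply eq_of_leT_eq
  rw [leT_quotTop, quotRel_eq_qR, leT_recT]
  funext x y
  exact propext (B1_qbc_iff (adm_iff.1 hu) (hs_rel hu hs)
    (fun x => leT_refl s x) (fun x y z => leT_trans) x y)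

end Back

lemma rec_eq {t t' t'' : TopologicalSpace X} (h2 : adm t'' t') (h1 : adm t' t) :
    recT (quotTop t' t'') t = t' := by
  apply eq_of_leT_eq
  rw [leT_recT, leT_quotTop, quotRel_eq_qR]
  funext x y
  exact propext (relAdm_inf (adm_iff.1 h2) (adm_iff.1 h1) x y).symm

lemma finite_topSpace : Finite (TopologicalSpace X) :=
  Finite.of_injective (fun t => t.IsOpen) (fun t t' h => TopologicalSpace.ext h)

end MainLemmas

noncomputable local instance {X : Type*} : Zero (TVect X ⊗[ℚ] TVect X) := AddMonoid.toZero
noncomputable local instance {X : Type*} : Zero (TVect X ⊗[ℚ] (TVect X ⊗[ℚ] TVect X)) :=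
  AddMonoid.toZero
noncomputable local instance {X : Type*} : Zero ((TVect X ⊗[ℚ] TVect X) ⊗[ℚ] TVect X) :=
  AddMonoid.toZero

section FinPart
variable {X : Type*} [Finite X]

lemma GamLin_single (t : TopologicalSpace X) (r : ℚ) :
    GamLin X (Finsupp.single t r) = r • GamFun t := by
  simp [GamLin]

lemma GamFun_eq [Fintype (TopologicalSpace X)] [∀ a b : TopologicalSpace X, Decidable (adm a b)]
    (t : TopologicalSpace X) :
    GamFun t = ∑ t' : TopologicalSpace X,
      if adm t' t then
        (Finsupp.single t' (1 : ℚ)) ⊗ₜ[ℚ] (Finsupp.single (quotTop t t') (1 : ℚ))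
      else 0 := by
  unfold GamFun
  rw [finsum_eq_sum_of_fintype]
  exact Finset.sum_congr rfl fun t' _ => finsum_eq_if

lemma key_bij [Fintype (TopologicalSpace X)] [∀ a b : TopologicalSpace X, Decidable (adm a b)]
    (t : TopologicalSpace X) :
    (∑ t' : TopologicalSpace X, ∑ t'' : TopologicalSpace X,
      if adm t' t ∧ adm t'' t' then
        (Finsupp.single t'' (1 : ℚ)) ⊗ₜ[ℚ]
          ((Finsupp.single (quotTop t' t'') (1 : ℚ)) ⊗ₜ[ℚ]
            (Finsupp.single (quotTop t t') (1 : ℚ)))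
      else 0)
    = ∑ u : TopologicalSpace X, ∑ s : TopologicalSpace X,
      if adm u t ∧ adm s (quotTop t u) then
        (Finsupp.single u (1 : ℚ)) ⊗ₜ[ℚ]
          ((Finsupp.single s (1 : ℚ)) ⊗ₜ[ℚ]
            (Finsupp.single (quotTop (quotTop t u) s) (1 : ℚ)))
      else 0 := by
  rw [← Finset.sum_product', ← Finset.sum_product', ← Finset.sum_filter, ← Finset.sum_filter]
  refine Finset.sum_nbij' (i := fun p => (p.2, quotTop p.1 p.2))
    (j := fun q => (recT q.2 t, q.1)) ?_ ?_ ?_ ?_ ?_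
  · intro p hp
    obtain ⟨-, h1, h2⟩ := Finset.mem_filter.1 hp
    exact Finset.mem_filter.2 ⟨Finset.mem_product.2 ⟨Finset.mem_univ _, Finset.mem_univ _⟩,
      adm_trans h2 h1, adm_quot h2 h1⟩
  · intro q hq
    obtain ⟨-, h1, h2⟩ := Finset.mem_filter.1 hq
    exact Finset.mem_filter.2 ⟨Finset.mem_product.2 ⟨Finset.mem_univ _, Finset.mem_univ _⟩,
      adm_back1 h1 h2, adm_back2 h1 h2⟩
  · intro p hp
    obtain ⟨-, h1, h2⟩ := Finset.mem_filter.1 hp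
    exact Prod.ext (rec_eq h2 h1) rfl
  · intro q hq
    obtain ⟨-, h1, h2⟩ := Finset.mem_filter.1 hq
    exact Prod.ext rfl (quot_rec h1 h2)
  · intro p hp
    obtain ⟨-, h1, h2⟩ := Finset.mem_filter.1 hp
    rw [quot_quot h2 h1]

end FinPart

section Final
variable {X : Type*} [Finite X]


lemma assoc_tl (x y z : TVect X) :
    (TensorProduct.assoc ℚ (TVect X) (TVect X) (TVect X)).toLinearMap ((x ⊗ₜ[ℚ] y) ⊗ₜ[ℚ] z)
      = x ⊗ₜ[ℚ] (y ⊗ₜ[ℚ] z) :=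
  TensorProduct.assoc_tmul x y z

lemma expandL [Fintype (TopologicalSpace X)] [∀ a b : TopologicalSpace X, Decidable (adm a b)]
    (t : TopologicalSpace X) :
    (TensorProduct.assoc ℚ (TVect X) (TVect X) (TVect X)).toLinearMap
      (TensorProduct.map (GamLin X) LinearMap.id (GamFun t)) =
    ∑ t' : TopologicalSpace X, ∑ t'' : TopologicalSpace X,
      if adm t' t ∧ adm t'' t' then
        (Finsupp.single t'' (1 : ℚ)) ⊗ₜ[ℚ]
          ((Finsupp.single (quotTop t' t'') (1 : ℚ)) ⊗ₜ[ℚ]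
            (Finsupp.single (quotTop t t') (1 : ℚ)))
      else 0 := by
  rw [GamFun_eq t, map_sum, map_sum]
  refine Finset.sum_congr rfl fun t' _ => ?_
  by_cases h1 : adm t' t
  · rw [if_pos h1, TensorProduct.map_tmul, LinearMap.id_apply, GamLin_single, one_smul,
      GamFun_eq t', TensorProduct.sum_tmul, map_sum]
    refine Finset.sum_congr rfl fun t'' _ => ?_
    rw [TensorProduct.ite_tmul]
    by_cases h2 : adm t'' t'
    · rw [if_pos h2, if_pos ⟨h1, h2⟩, assoc_tl _ _ _]
    · rw [if_neg h2, if_neg (fun h => h2 h.2), map_zero]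
  · rw [if_neg h1, map_zero, map_zero]
    exact (Finset.sum_eq_zero fun t'' _ => if_neg (fun h => h1 h.1)).symm

lemma expandR [Fintype (TopologicalSpace X)] [∀ a b : TopologicalSpace X, Decidable (adm a b)]
    (t : TopologicalSpace X) :
    TensorProduct.map LinearMap.id (GamLin X) (GamFun t) =
    ∑ u : TopologicalSpace X, ∑ s : TopologicalSpace X,
      if adm u t ∧ adm s (quotTop t u) then
        (Finsupp.single u (1 : ℚ)) ⊗ₜ[ℚ]
          ((Finsupp.single s (1 : ℚ)) ⊗ₜ[ℚ]
            (Finsupp.single (quotTop (quotTop t u) s) (1 : ℚ)))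
      else 0 := by
  rw [GamFun_eq t, map_sum]
  refine Finset.sum_congr rfl fun u _ => ?_
  by_cases h1 : adm u t
  · rw [if_pos h1, TensorProduct.map_tmul, LinearMap.id_apply, GamLin_single, one_smul,
      GamFun_eq (quotTop t u), TensorProduct.tmul_sum]
    refine Finset.sum_congr rfl fun s _ => ?_
    rw [TensorProduct.tmul_ite]
    by_cases h2 : adm s (quotTop t u)
    · rw [if_pos h2, if_pos ⟨h1, h2⟩]
    · rw [if_neg h2, if_neg (fun h => h2 h.2)]
  · rw [if_neg h1, map_zero]
    exact (Finset.sum_eq_zero fun s _ => if_neg (fun h => h1 h.1)).symm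

end Final

/-- The internal coproduct `Γ` is coassociative. -/
theorem GamLin_coassoc (X : Type*) [Finite X] :
    (TensorProduct.assoc ℚ (TVect X) (TVect X) (TVect X)).toLinearMap ∘ₗ
        (TensorProduct.map (GamLin X) LinearMap.id) ∘ₗ GamLin X =
      (TensorProduct.map LinearMap.id (GamLin X)) ∘ₗ GamLin X := by
  classical
  haveI : Finite (TopologicalSpace X) := finite_topSpace
  haveI : Fintype (TopologicalSpace X) := Fintype.ofFinite _
  apply Finsupp.lhom_ext
  intro t r
  simp only [LinearMap.comp_apply]
  rw [GamLin_single, map_smul, map_smul, map_smul]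
  congr 1
  rw [expandL, expandR, key_bij]
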